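/- Let Xin, Xnot, X⁺ and Z be jointly distributed random variables taking values in nonempty finite types, and write X = (Xin, Xnot). Assume (i) Z and Xnot are conditionally independent given (Xin, X⁺), and (ii) X⁺ and Xnot are conditionally independent given Xin. Then Iaug(X; X⁺; Z) = Iaug(Xin; X⁺; Z); that is, H((Xin, Xnot)) − H((Xin, Xnot, X⁺) ∣ Z) = H(Xin) − H((Xin, X⁺) ∣ Z). (Theorem 1 of the paper: the augmented mutual information over the full state equals the augmented mutual information over the involved subset alone.) -/

import Mathlib

open Real

/-- `p` is a probability mass function on the finite type `Ω`. -/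
def IsPmf {Ω : Type*} [Fintype Ω] (p : Ω → ℝ) : Prop :=
  (∀ ω, 0 ≤ p ω) ∧ ∑ ω, p ω = 1

/-- Shannon entropy of a pmf `q` on a finite type, with the convention `0 · log 0 = 0`. -/
noncomputable def entFun {S : Type*} [Fintype S] (q : S → ℝ) : ℝ :=
  ∑ s, Real.negMulLog (q s)

/-- The (marginal) distribution of the random variable `f : Ω → S` under `p`. -/
noncomputable def distOf {Ω S : Type*} [Fintype Ω] [Fintype S] [DecidableEq S]
    (p : Ω → ℝ) (f : Ω → S) : S → ℝ :=
  fun s => ∑ ω, if f ω = s then p ω else 0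

/-- Entropy `H(f)` of a (jointly distributed) random variable: the entropy of its marginal. -/
noncomputable def entOf {Ω S : Type*} [Fintype Ω] [Fintype S] [DecidableEq S]
    (p : Ω → ℝ) (f : Ω → S) : ℝ :=
  entFun (distOf p f)

/-- Conditional pmf of `f` given `g = t` :  `s ↦ p(f = s, g = t) / p(g = t)`. -/
noncomputable def condPmf {Ω S T : Type*} [Fintype Ω] [Fintype S] [DecidableEq S]
    [Fintype T] [DecidableEq T] (p : Ω → ℝ) (f : Ω → S) (g : Ω → T) (t : T) : S → ℝ :=
  fun s => distOf p (fun ω => (f ω, g ω)) (s, t) / distOf p g t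

/-- Conditional entropy `H(f ∣ g) = ∑ₜ p(g = t) · H(f ∣ g = t)`. -/
noncomputable def condEntOf {Ω S T : Type*} [Fintype Ω] [Fintype S] [DecidableEq S]
    [Fintype T] [DecidableEq T] (p : Ω → ℝ) (f : Ω → S) (g : Ω → T) : ℝ :=
  ∑ t, distOf p g t * entFun (condPmf p f g t)

/-- Mutual information `I(f;g) = H(f) − H(f ∣ g)`. -/
noncomputable def miOf {Ω S T : Type*} [Fintype Ω] [Fintype S] [DecidableEq S]
    [Fintype T] [DecidableEq T] (p : Ω → ℝ) (f : Ω → S) (g : Ω → T) : ℝ :=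
  entOf p f - condEntOf p f g

/-- Augmented mutual information `Iaug(X; X⁺; Z) = H(X) − H((X,X⁺) ∣ Z)`. -/
noncomputable def miAug {Ω S S' T : Type*} [Fintype Ω] [Fintype S] [DecidableEq S]
    [Fintype S'] [DecidableEq S'] [Fintype T] [DecidableEq T]
    (p : Ω → ℝ) (X : Ω → S) (Xp : Ω → S') (Z : Ω → T) : ℝ :=
  entOf p X - condEntOf p (fun ω => (X ω, Xp ω)) Z

/-- `f` and `g` are conditionally independent given `h` under the joint pmf `p`:
`p(f = s, g = t ∣ h = u) = p(f = s ∣ h = u) · p(g = t ∣ h = u)` for every `u` with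
positive probability. -/
def CondIndep {Ω S T U : Type*} [Fintype Ω] [Fintype S] [DecidableEq S]
    [Fintype T] [DecidableEq T] [Fintype U] [DecidableEq U]
    (p : Ω → ℝ) (f : Ω → S) (g : Ω → T) (h : Ω → U) : Prop :=
  ∀ u : U, 0 < distOf p h u → ∀ (s : S) (t : T),
    condPmf p (fun ω => (f ω, g ω)) h u (s, t) =
      condPmf p f h u s * condPmf p g h u t

section Helpers

variable {Ω : Type*} [Fintype Ω] {p : Ω → ℝ}

lemma distOf_congr {S T : Type*} [Fintype S] [DecidableEq S] [Fintype T] [DecidableEq T]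
    {f : Ω → S} {g : Ω → T} {s : S} {t : T} (h : ∀ ω, f ω = s ↔ g ω = t) :
    distOf p f s = distOf p g t := by
  unfold distOf
  exact Finset.sum_congr rfl fun ω _ => if_congr (h ω) rfl rfl

lemma distOf_singleton [DecidableEq Ω] {S : Type*} [Fintype S] [DecidableEq S]
    {f : Ω → S} {s : S} {x : Ω} (h : ∀ ω, f ω = s ↔ ω = x) :
    distOf p f s = p x := by
  rw [distOf_congr (g := id) (t := x) h]
  simp [distOf]

lemma distOf_nonneg {S : Type*} [Fintype S] [DecidableEq S]
    (hp : ∀ ω, 0 ≤ p ω) (f : Ω → S) (s : S) : 0 ≤ distOf p f s := by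
  apply Finset.sum_nonneg
  intro i _
  split <;> first | exact hp i | exact le_rfl

lemma le_distOf {S : Type*} [Fintype S] [DecidableEq S]
    (hp : ∀ ω, 0 ≤ p ω) {f : Ω → S} {ω : Ω} {s : S} (h : f ω = s) :
    p ω ≤ distOf p f s := by
  have := Finset.single_le_sum (f := fun i => if f i = s then p i else 0)
    (fun i _ => by split <;> first | exact hp i | exact le_rfl)
    (Finset.mem_univ ω)
  rwa [if_pos h] at this

lemma distOf_pair_le {S T : Type*} [Fintype S] [DecidableEq S] [Fintype T] [DecidableEq T]
    (hp : ∀ ω, 0 ≤ p ω) (f : Ω → S) (g : Ω → T) (s : S) (t : T) :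
    distOf p (fun ω => (f ω, g ω)) (s, t) ≤ distOf p g t := by
  apply Finset.sum_le_sum
  intro i _
  by_cases h1 : (f i, g i) = (s, t)
  · rw [if_pos h1, if_pos (congrArg Prod.snd h1)]
  · rw [if_neg h1]
    split <;> first | exact hp i | exact le_rfl

lemma sum_push {S : Type*} [Fintype S] [DecidableEq S] (f : Ω → S) (c : S → ℝ) :
    ∑ s, distOf p f s * c s = ∑ ω, p ω * c (f ω) := by
  unfold distOf
  simp_rw [Finset.sum_mul, ite_mul, zero_mul]
  rw [Finset.sum_comm]
  refine Finset.sum_congr rfl fun ω _ => ?_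
  simp

lemma entOf_eq {S : Type*} [Fintype S] [DecidableEq S] (f : Ω → S) :
    entOf p f = -∑ ω, p ω * Real.log (distOf p f (f ω)) := by
  rw [← sum_push f (fun s => Real.log (distOf p f s))]
  unfold entOf entFun
  rw [← Finset.sum_neg_distrib]
  exact Finset.sum_congr rfl fun s _ => by rw [Real.negMulLog]; ring

lemma condEntOf_eq {S T : Type*} [Fintype S] [DecidableEq S] [Fintype T] [DecidableEq T]
    (hp : ∀ ω, 0 ≤ p ω) (f : Ω → S) (g : Ω → T) :
    condEntOf p f g = -∑ ω, p ω *
      Real.log (distOf p (fun ω => (f ω, g ω)) (f ω, g ω) / distOf p g (g ω)) := by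
  have key : ∀ s t, distOf p g t * Real.negMulLog (condPmf p f g t s)
      = -(distOf p (fun ω => (f ω, g ω)) (s, t) *
          Real.log (distOf p (fun ω => (f ω, g ω)) (s, t) / distOf p g t)) := by
    intro s t
    rcases eq_or_lt_of_le (distOf_nonneg hp g t) with h0 | h0
    · have hj : distOf p (fun ω => (f ω, g ω)) (s, t) = 0 :=
        le_antisymm (by rw [h0]; exact distOf_pair_le hp f g s t)
          (distOf_nonneg hp _ _)
      rw [← h0, hj]; simp
    · rw [condPmf, Real.negMulLog]
      field_simp
  rw [← sum_push (fun ω => (f ω, g ω))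
      (fun st => Real.log (distOf p (fun ω => (f ω, g ω)) st / distOf p g st.2))]
  unfold condEntOf entFun
  rw [← Finset.sum_neg_distrib, Fintype.sum_prod_type_right]
  refine Finset.sum_congr rfl fun t _ => ?_
  rw [Finset.mul_sum]
  exact Finset.sum_congr rfl fun s _ => key s t

end Helpers

/-- **Theorem 1.** If (i) `Z ⟂ Xnot ∣ (Xin, X⁺)` and (ii) `X⁺ ⟂ Xnot ∣ Xin`, then the
augmented MI over the full state `X = (Xin, Xnot)` equals the augmented MI over the
involved subset `Xin` alone: `Iaug(X; X⁺; Z) = Iaug(Xin; X⁺; Z)`. -/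
theorem miAug_involved
    {Xin Xnot Xp Z : Type*}
    [Fintype Xin] [DecidableEq Xin] [Nonempty Xin]
    [Fintype Xnot] [DecidableEq Xnot] [Nonempty Xnot]
    [Fintype Xp] [DecidableEq Xp] [Nonempty Xp]
    [Fintype Z] [DecidableEq Z] [Nonempty Z]
    (p : Xin × Xnot × Xp × Z → ℝ) (hp : IsPmf p)
    (hZ : CondIndep p (fun ω => ω.2.2.2) (fun ω => ω.2.1) (fun ω => (ω.1, ω.2.2.1)))
    (hXp : CondIndep p (fun ω => ω.2.2.1) (fun ω => ω.2.1) (fun ω => ω.1)) :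
    miAug p (fun ω => (ω.1, ω.2.1)) (fun ω => ω.2.2.1) (fun ω => ω.2.2.2)
      = miAug p (fun ω => ω.1) (fun ω => ω.2.2.1) (fun ω => ω.2.2.2) := by
  obtain ⟨hp0, -⟩ := hp
  unfold miAug
  rw [entOf_eq, entOf_eq, condEntOf_eq hp0, condEntOf_eq hp0, neg_sub_neg, neg_sub_neg,
    ← Finset.sum_sub_distrib, ← Finset.sum_sub_distrib]
  refine Finset.sum_congr rfl fun ω _ => ?_
  obtain ⟨a, b, c, d⟩ := ω
  beta_reduce
  simp only []
  rcases eq_or_lt_of_le (hp0 (a, b, c, d)) with h0 | h0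
  · rw [← h0]; ring
  · set A := distOf p (fun ω : Xin × Xnot × Xp × Z => ω.1) a with hAdef
    set D := distOf p (fun ω : Xin × Xnot × Xp × Z => ω.2.2.2) d with hDdef
    set AB := distOf p (fun ω : Xin × Xnot × Xp × Z => (ω.1, ω.2.1)) (a, b) with hABdef
    set AC := distOf p (fun ω : Xin × Xnot × Xp × Z => (ω.1, ω.2.2.1)) (a, c) with hACdef
    set ABC := distOf p (fun ω : Xin × Xnot × Xp × Z => (ω.1, ω.2.1, ω.2.2.1)) (a, b, c)
      with hABCdef
    set ACD := distOf p (fun ω : Xin × Xnot × Xp × Z => ((ω.1, ω.2.2.1), ω.2.2.2)) ((a, c), d)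
      with hACDdef
    have hA : 0 < A := lt_of_lt_of_le h0 (le_distOf hp0 rfl)
    have hD : 0 < D := lt_of_lt_of_le h0 (le_distOf hp0 rfl)
    have hAB : 0 < AB := lt_of_lt_of_le h0 (le_distOf hp0 rfl)
    have hAC : 0 < AC := lt_of_lt_of_le h0 (le_distOf hp0 rfl)
    have hABC : 0 < ABC := lt_of_lt_of_le h0 (le_distOf hp0 rfl)
    have hACD : 0 < ACD := lt_of_lt_of_le h0 (le_distOf hp0 rfl)
    have hFULL : distOf p
        (fun ω : Xin × Xnot × Xp × Z => (((ω.1, ω.2.1), ω.2.2.1), ω.2.2.2))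
        (((a, b), c), d) = p (a, b, c, d) := by
      apply distOf_singleton
      rintro ⟨w, x, y, z⟩
      simp only [Prod.ext_iff, Prod.mk.injEq]
      tauto
    -- hypothesis (ii)
    have e2 := hXp a hA c b
    unfold condPmf at e2
    rw [distOf_congr (f := fun ω : Xin × Xnot × Xp × Z => ((ω.2.2.1, ω.2.1), ω.1))
        (s := ((c, b), a))
        (g := fun ω : Xin × Xnot × Xp × Z => (ω.1, ω.2.1, ω.2.2.1)) (t := (a, b, c))
        (by rintro ⟨w, x, y, z⟩; simp only [Prod.mk.injEq]; tauto),
      distOf_congr (f := fun ω : Xin × Xnot × Xp × Z => (ω.2.2.1, ω.1)) (s := (c, a))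
        (g := fun ω : Xin × Xnot × Xp × Z => (ω.1, ω.2.2.1)) (t := (a, c))
        (by rintro ⟨w, x, y, z⟩; simp only [Prod.mk.injEq]; tauto),
      distOf_congr (f := fun ω : Xin × Xnot × Xp × Z => (ω.2.1, ω.1)) (s := (b, a))
        (g := fun ω : Xin × Xnot × Xp × Z => (ω.1, ω.2.1)) (t := (a, b))
        (by rintro ⟨w, x, y, z⟩; simp only [Prod.mk.injEq]; tauto)] at e2
    rw [← hABCdef, ← hACdef, ← hABdef, ← hAdef] at e2
    have e2' : ABC * A = AC * AB := by
      refine mul_right_cancel₀ hA.ne' ?_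
      field_simp at e2
      linear_combination A * e2
    -- hypothesis (i)
    have e1 := hZ (a, c) hAC d b
    unfold condPmf at e1
    rw [distOf_singleton
        (f := fun ω : Xin × Xnot × Xp × Z => ((ω.2.2.2, ω.2.1), (ω.1, ω.2.2.1)))
        (s := ((d, b), (a, c))) (x := (a, b, c, d))
        (by rintro ⟨w, x, y, z⟩; simp only [Prod.ext_iff, Prod.mk.injEq]; tauto),
      distOf_congr (f := fun ω : Xin × Xnot × Xp × Z => (ω.2.2.2, (ω.1, ω.2.2.1)))
        (s := (d, (a, c)))
        (g := fun ω : Xin × Xnot × Xp × Z => ((ω.1, ω.2.2.1), ω.2.2.2)) (t := ((a, c), d))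
        (by rintro ⟨w, x, y, z⟩; simp only [Prod.mk.injEq]; tauto),
      distOf_congr (f := fun ω : Xin × Xnot × Xp × Z => (ω.2.1, (ω.1, ω.2.2.1)))
        (s := (b, (a, c)))
        (g := fun ω : Xin × Xnot × Xp × Z => (ω.1, ω.2.1, ω.2.2.1)) (t := (a, b, c))
        (by rintro ⟨w, x, y, z⟩; simp only [Prod.mk.injEq]; tauto)] at e1
    rw [← hACDdef, ← hABCdef, ← hACdef] at e1
    have e1' : p (a, b, c, d) * AC = ACD * ABC := by
      refine mul_right_cancel₀ hAC.ne' ?_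
      field_simp at e1
      linear_combination AC * e1
    have key : p (a, b, c, d) * A = ACD * AB := by
      apply mul_right_cancel₀ (mul_ne_zero hAC.ne' hABC.ne')
      linear_combination (A * ABC) * e1' + (ACD * ABC) * e2'
    have hlog : Real.log (p (a, b, c, d)) + Real.log A
        = Real.log ACD + Real.log AB := by
      rw [← Real.log_mul h0.ne' hA.ne', ← Real.log_mul hACD.ne' hAB.ne', key]
    rw [hFULL, Real.log_div h0.ne' hD.ne', Real.log_div hACD.ne' hD.ne']
    linear_combination (p (a, b, c, d)) * hlog
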